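/- For all integers n ≥ 1 and r ≥ 0, one has the identity in ℚ: ∑_{k=1}^n (−1)^k C(n,k) · S_k({1}^r)/k = −H_n^{(r+1)}. -/

import Mathlib

/-- Non-strict multiple harmonic sum
`S_n({t}^r) = ∑_{1 ≤ j₁ ≤ ⋯ ≤ j_r ≤ n} 1/(j₁^t ⋯ j_r^t)`, defined by recursion on the
number `r` of indices (summing over the largest index `j_r`). -/
def mhs (t : ℕ) : ℕ → ℕ → ℚ
  | 0, _ => 1
  | r + 1, n => ∑ j ∈ Finset.Icc 1 n, mhs t r j / (j : ℚ) ^ t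

/-- The harmonic number of order `t`: `H_n^{(t)} = ∑_{j=1}^n 1/j^t`. -/
def harm (t n : ℕ) : ℚ := ∑ j ∈ Finset.Icc 1 n, 1 / (j : ℚ) ^ t

lemma mhs_one (t r : ℕ) : mhs t r 1 = 1 := by
  induction r with
  | zero => rfl
  | succ r ih => simp [mhs, ih]

/-- Partial alternating sum of binomial coefficients. -/
lemma partial_alt (m : ℕ) (hm : 1 ≤ m) (j : ℕ) :
    ∑ k ∈ Finset.range (j + 1), (-1 : ℚ) ^ k * (m.choose k : ℚ)
      = (-1) ^ j * ((m - 1).choose j : ℚ) := by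
  induction j with
  | zero => simp
  | succ j ih =>
    rw [Finset.sum_range_succ, ih]
    obtain ⟨m', rfl⟩ : ∃ m', m = m' + 1 := ⟨m - 1, by omega⟩
    simp only [Nat.add_sub_cancel]
    rw [Nat.choose_succ_succ m' j]
    push_cast
    ring

lemma sum_range_succ_eq (f : ℕ → ℚ) (m : ℕ) :
    ∑ k ∈ Finset.range (m + 1), f k = f 0 + ∑ k ∈ Finset.Icc 1 m, f k := by
  rw [Finset.range_eq_Ico, Finset.sum_eq_sum_Ico_succ_bot (Nat.succ_pos m)]
  rw [Nat.succ_eq_add_one, Finset.Ico_add_one_right_eq_Icc]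

lemma full_alt (m : ℕ) (hm : 1 ≤ m) :
    ∑ k ∈ Finset.Icc 1 m, (-1 : ℚ) ^ k * (m.choose k : ℚ) = -1 := by
  have h := partial_alt m hm m
  rw [sum_range_succ_eq (fun k => (-1 : ℚ) ^ k * (m.choose k : ℚ)) m] at h
  rw [Nat.choose_eq_zero_of_lt (by omega : m - 1 < m)] at h
  simp at h
  linarith

lemma tail_alt (m j : ℕ) (hm : 1 ≤ m) (hj1 : 1 ≤ j) (hjm : j ≤ m) :
    ∑ k ∈ Finset.Icc j m, (-1 : ℚ) ^ k * (m.choose k : ℚ)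
      = (-1) ^ j * ((m - 1).choose (j - 1) : ℚ) := by
  have hsplit : (∑ k ∈ Finset.range j, (-1 : ℚ) ^ k * (m.choose k : ℚ))
      + ∑ k ∈ Finset.Icc j m, (-1 : ℚ) ^ k * (m.choose k : ℚ)
      = ∑ k ∈ Finset.range (m + 1), (-1 : ℚ) ^ k * (m.choose k : ℚ) := by
    rw [← Finset.Ico_add_one_right_eq_Icc]
    simp only [Finset.range_eq_Ico]
    exact Finset.sum_Ico_consecutive _ (by omega) (by omega)
  have hfull := partial_alt m hm m
  rw [Nat.choose_eq_zero_of_lt (by omega : m - 1 < m)] at hfull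
  simp only [Nat.cast_zero, mul_zero] at hfull
  obtain ⟨j', rfl⟩ : ∃ j', j = j' + 1 := ⟨j - 1, by omega⟩
  have hpart := partial_alt m hm j'
  rw [hpart] at hsplit
  rw [hfull] at hsplit
  simp only [Nat.add_sub_cancel]
  have : ((-1 : ℚ)) ^ (j' + 1) = -(-1 : ℚ) ^ j' := by ring
  rw [this]
  linarith

lemma keyG (m : ℕ) (hm : 1 ≤ m) (r : ℕ) :
    ∑ k ∈ Finset.Icc 1 m, (-1 : ℚ) ^ k * (m.choose k : ℚ) * mhs 1 r k
      = -1 / (m : ℚ) ^ r := by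
  have hmQ : (m : ℚ) ≠ 0 := Nat.cast_ne_zero.mpr (by omega)
  induction r with
  | zero =>
    simp only [mhs, mul_one, pow_zero]
    rw [full_alt m hm]
    norm_num
  | succ r ih =>
    have expand : ∀ k, mhs 1 (r + 1) k = ∑ j ∈ Finset.Icc 1 k, mhs 1 r j / (j : ℚ) := by
      intro k; simp [mhs]
    calc ∑ k ∈ Finset.Icc 1 m, (-1 : ℚ) ^ k * (m.choose k : ℚ) * mhs 1 (r + 1) k
        = ∑ k ∈ Finset.Icc 1 m, ∑ j ∈ Finset.Icc 1 k,
            (-1 : ℚ) ^ k * (m.choose k : ℚ) * (mhs 1 r j / (j : ℚ)) := by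
          refine Finset.sum_congr rfl fun k _ => ?_
          rw [expand, Finset.mul_sum]
      _ = ∑ j ∈ Finset.Icc 1 m, ∑ k ∈ Finset.Icc j m,
            (-1 : ℚ) ^ k * (m.choose k : ℚ) * (mhs 1 r j / (j : ℚ)) := by
          simp only [← Finset.Ico_add_one_right_eq_Icc]
          exact (Finset.sum_Ico_Ico_comm 1 (m + 1)
            (fun j k => (-1 : ℚ) ^ k * (m.choose k : ℚ) * (mhs 1 r j / (j : ℚ)))).symm
      _ = ∑ j ∈ Finset.Icc 1 m,
            (-1 : ℚ) ^ j * (m.choose j : ℚ) * mhs 1 r j / (m : ℚ) := by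
          refine Finset.sum_congr rfl fun j hj => ?_
          rw [Finset.mem_Icc] at hj
          rw [← Finset.sum_mul, tail_alt m j hm hj.1 hj.2]
          -- now need : (-1)^j * C(m-1,j-1) * (mhs 1 r j / j) = (-1)^j * C(m,j) * mhs / m
          have hjQ : (j : ℚ) ≠ 0 := Nat.cast_ne_zero.mpr (by omega)
          have hc : (m : ℚ) * ((m - 1).choose (j - 1) : ℚ) = (m.choose j : ℚ) * (j : ℚ) := by
            obtain ⟨m', rfl⟩ : ∃ m', m = m' + 1 := ⟨m - 1, by omega⟩
            obtain ⟨j', rfl⟩ : ∃ j', j = j' + 1 := ⟨j - 1, by omega⟩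
            simp only [Nat.add_sub_cancel]
            exact_mod_cast Nat.add_one_mul_choose_eq m' j'
          field_simp
          linear_combination (mhs 1 r j) * hc
      _ = (∑ j ∈ Finset.Icc 1 m, (-1 : ℚ) ^ j * (m.choose j : ℚ) * mhs 1 r j) / (m : ℚ) := by
          rw [Finset.sum_div]
      _ = -1 / (m : ℚ) ^ (r + 1) := by
          rw [ih]
          field_simp
          ring

theorem stmt6 (n : ℕ) (hn : 1 ≤ n) (r : ℕ) :
    ∑ k ∈ Finset.Icc 1 n, (-1 : ℚ) ^ k * (n.choose k : ℚ) * (mhs 1 r k / k)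
      = -harm (r + 1) n := by
  induction n with
  | zero => omega
  | succ n ih =>
    rcases Nat.eq_zero_or_pos n with rfl | hn1
    · simp [mhs_one, harm]
    have hnQ : ((n : ℚ) + 1) ≠ 0 := by positivity
    have harm_succ : harm (r + 1) (n + 1) = harm (r + 1) n + 1 / ((n : ℚ) + 1) ^ (r + 1) := by
      simp [harm, Finset.sum_Icc_succ_top (by omega : 1 ≤ n + 1)]
    have key := keyG (n + 1) (by omega) r
    push_cast at key
    have hsplit : ∀ k ∈ Finset.Icc 1 (n + 1),
        (-1 : ℚ) ^ k * ((n + 1).choose k : ℚ) * (mhs 1 r k / k)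
          = (-1 : ℚ) ^ k * (n.choose k : ℚ) * (mhs 1 r k / k)
            + (1 / ((n : ℚ) + 1)) * ((-1 : ℚ) ^ k * ((n + 1).choose k : ℚ) * mhs 1 r k) := by
      intro k hk
      rw [Finset.mem_Icc] at hk
      obtain ⟨j, rfl⟩ : ∃ j, k = j + 1 := ⟨k - 1, by omega⟩
      have hp : ((n + 1).choose (j + 1) : ℚ) = (n.choose j : ℚ) + (n.choose (j + 1) : ℚ) := by
        exact_mod_cast Nat.choose_succ_succ n j
      have hc : ((n : ℚ) + 1) * (n.choose j : ℚ) = ((n + 1).choose (j + 1) : ℚ) * ((j : ℚ) + 1) := by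
        exact_mod_cast Nat.add_one_mul_choose_eq n j
      have hjQ : ((j : ℚ) + 1) ≠ 0 := by positivity
      have hk1 : ((j : ℚ) + 1) = ((j + 1 : ℕ) : ℚ) := by push_cast; ring
      rw [← hk1]
      field_simp
      linear_combination (mhs 1 r (j + 1) * ((n : ℚ) + 1)) * hp
        + (mhs 1 r (j + 1)) * hc
    rw [Finset.sum_congr rfl hsplit, Finset.sum_add_distrib, ← Finset.mul_sum]
    rw [Finset.sum_Icc_succ_top (by omega : 1 ≤ n + 1)]
    rw [Nat.choose_eq_zero_of_lt (by omega : n < n + 1)]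
    push_cast
    rw [ih hn1, key, harm_succ]
    field_simp
    ring
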